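/- Let 𝔅 be a closed bicategory, let A and B be 0-cells, and let F be a transformation of represented pseudofunctors 𝔅(A,−) → 𝔅(B,−) with components F_C and structure 2-cells K ⊙ F(X) → F(K ⊙ X). Then the structure 2-cells K ⊙ F(X) → F(K ⊙ X) are isomorphisms for all 1-cells K and X (i.e., F is a strong transformation) if and only if F admits a right adjoint transformation: a family of functors G_C : 𝔅(B,C) → 𝔅(A,C) with F_C left adjoint to G_C for each C, together with 2-cells K' ⊙ G(X') → G(K' ⊙ X'), natural, associative and unital, making G a transformation of represented pseudofunctors 𝔅(B,−) → 𝔅(A,−) compatible (via mates) with the structure 2-cells of F. -/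

import Mathlib

/-!
STATEMENT 11.  Let `𝔅` be a closed bicategory, `A`, `B` 0-cells and `F` a transformation of
represented pseudofunctors `𝔅(A,−) → 𝔅(B,−)` with components `F_C` and structure 2-cells
`K ⊙ F(X) → F(K ⊙ X)`.  The structure 2-cells are isomorphisms (`F` is strong) if and only
if `F` admits a right adjoint transformation: a family `G_C : 𝔅(B,C) → 𝔅(A,C)` with
`F_C ⊣ G_C`, together with structure 2-cells making `G` a transformation of represented
pseudofunctors `𝔅(B,−) → 𝔅(A,−)` which is compatible with the structure 2-cells of `F`
via mates (i.e. the mate of `G`'s structure 2-cell is a two-sided inverse of `F`'s).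

Conventions: a paper 1-cell `M : X → Y` is `M : x ⟶ y` and `L ⊙ M = M ≫ L`.
-/

open CategoryTheory CategoryTheory.Bicategory

universe w v u

variable {B : Type u} [Bicategory.{w, v} B]

/-- Precomposition `(− ⊙ M) : 𝔅(Y,C) → 𝔅(X,C)` with `M : x ⟶ y`. -/
@[simps]
def precompF {x y : B} (M : x ⟶ y) (c : B) : (y ⟶ c) ⥤ (x ⟶ c) where
  obj Z := M ≫ Z
  map θ := M ◁ θ

/-- Postcomposition `(M ⊙ −) : 𝔅(C,X) → 𝔅(C,Y)` with `M : x ⟶ y`. -/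
@[simps]
def postcompF {x y : B} (M : x ⟶ y) (c : B) : (c ⟶ x) ⥤ (c ⟶ y) where
  obj Z := Z ≫ M
  map θ := θ ▷ M

/-- A transformation structure on a family of functors `F_C : 𝔅(A,C) → 𝔅(B,C)` between
the represented pseudofunctors: structure 2-cells `K ⊙ F(X) ⟶ F(K ⊙ X)`, natural in `K`
and `X`, associative and unital. -/
structure TransData (a b : B) (F : ∀ c : B, (a ⟶ c) ⥤ (b ⟶ c)) where
  t : ∀ {c₁ c₂ : B} (K : c₁ ⟶ c₂) (X : a ⟶ c₁),
    (F c₁).obj X ≫ K ⟶ (F c₂).obj (X ≫ K)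
  natK : ∀ {c₁ c₂ : B} {K K' : c₁ ⟶ c₂} (κ : K ⟶ K') (X : a ⟶ c₁),
    ((F c₁).obj X ◁ κ) ≫ t K' X = t K X ≫ (F c₂).map (X ◁ κ)
  natX : ∀ {c₁ c₂ : B} (K : c₁ ⟶ c₂) {X X' : a ⟶ c₁} (ξ : X ⟶ X'),
    ((F c₁).map ξ ▷ K) ≫ t K X' = t K X ≫ (F c₂).map (ξ ▷ K)
  assoc : ∀ {c₁ c₂ c₃ : B} (K : c₁ ⟶ c₂) (L : c₂ ⟶ c₃) (X : a ⟶ c₁),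
    (t K X ▷ L) ≫ t L (X ≫ K) =
      (α_ ((F c₁).obj X) K L).hom ≫ t (K ≫ L) X ≫ (F c₃).map (α_ X K L).inv
  unital : ∀ {c₁ : B} (X : a ⟶ c₁),
    t (𝟙 c₁) X = (ρ_ ((F c₁).obj X)).hom ≫ (F c₁).map (ρ_ X).inv

/-- The mate, with respect to adjunctions `F_C ⊣ G_C`, of the structure 2-cell of a
transformation structure on the right adjoints `G`; it goes in the direction opposite
to the structure 2-cells of `F`. -/
def mateMap {a b : B} {F : ∀ c : B, (a ⟶ c) ⥤ (b ⟶ c)} {G : ∀ c : B, (b ⟶ c) ⥤ (a ⟶ c)}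
    (adjFG : ∀ c : B, F c ⊣ G c) (s' : TransData b a G)
    {c₁ c₂ : B} (K : c₁ ⟶ c₂) (X : a ⟶ c₁) :
    (F c₂).obj (X ≫ K) ⟶ (F c₁).obj X ≫ K :=
  ((adjFG c₂).homEquiv _ _).symm
    ((((adjFG c₁).unit.app X) ▷ K) ≫ s'.t K ((F c₁).obj X))


section Aux

variable {a b : B} {F : ∀ c : B, (a ⟶ c) ⥤ (b ⟶ c)} {G : ∀ c : B, (b ⟶ c) ⥤ (a ⟶ c)}

lemma adj_hom_ext (adjFG : ∀ c : B, F c ⊣ G c) {c : B} {Z : a ⟶ c} {W : b ⟶ c}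
    {f g : Z ⟶ (G c).obj W}
    (h : (F c).map f ≫ (adjFG c).counit.app W = (F c).map g ≫ (adjFG c).counit.app W) :
    f = g :=
  ((adjFG c).homEquiv Z W).symm.injective (by
    rw [Adjunction.homEquiv_counit, Adjunction.homEquiv_counit, h])

variable (adjFG : ∀ c : B, F c ⊣ G c) (s : TransData a b F)
  (hiso : ∀ {c₁ c₂ : B} (K : c₁ ⟶ c₂) (X : a ⟶ c₁), IsIso (s.t K X))

/-- The structure 2-cell for the right-adjoint transformation. -/
noncomputable def rightT {c₁ c₂ : B} (K : c₁ ⟶ c₂) (Y : b ⟶ c₁) :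
    (G c₁).obj Y ≫ K ⟶ (G c₂).obj (Y ≫ K) :=
  haveI := hiso K ((G c₁).obj Y)
  (adjFG c₂).homEquiv _ _ (inv (s.t K ((G c₁).obj Y)) ≫ ((adjFG c₁).counit.app Y ▷ K))

lemma rightT_char {c₁ c₂ : B} (K : c₁ ⟶ c₂) (Y : b ⟶ c₁) :
    s.t K ((G c₁).obj Y) ≫ (F c₂).map (rightT adjFG s hiso K Y) ≫
      (adjFG c₂).counit.app (Y ≫ K) = (adjFG c₁).counit.app Y ▷ K := by
  haveI := hiso K ((G c₁).obj Y)
  have h := Adjunction.homEquiv_counit (adj := adjFG c₂)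
    (g := (adjFG c₂).homEquiv _ _ (inv (s.t K ((G c₁).obj Y)) ≫ ((adjFG c₁).counit.app Y ▷ K)))
  rw [Equiv.symm_apply_apply] at h
  show s.t K ((G c₁).obj Y) ≫ (F c₂).map ((adjFG c₂).homEquiv _ _
      (inv (s.t K ((G c₁).obj Y)) ≫ ((adjFG c₁).counit.app Y ▷ K))) ≫
      (adjFG c₂).counit.app (Y ≫ K) = (adjFG c₁).counit.app Y ▷ K
  simp only [CategoryTheory.Functor.id_obj] at h ⊢
  rw [← h, IsIso.hom_inv_id_assoc]

/-- The right-adjoint transformation data. -/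
noncomputable def rightTrans : TransData b a G where
  t K Y := rightT adjFG s hiso K Y
  natK {c₁ c₂ K K'} κ X := by
    haveI := hiso K ((G c₁).obj X)
    apply adj_hom_ext adjFG
    rw [← cancel_epi (s.t K ((G c₁).obj X))]
    simp only [Functor.map_comp, Category.assoc]
    rw [← reassoc_of% (s.natK κ ((G c₁).obj X)), rightT_char]
    erw [(adjFG c₂).counit_naturality]
    rw [reassoc_of% (rightT_char adjFG s hiso K X)]
    exact whisker_exchange _ _
  natX {c₁ c₂} K {X X'} ξ := by
    haveI := hiso K ((G c₁).obj X)
    apply adj_hom_ext adjFG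
    rw [← cancel_epi (s.t K ((G c₁).obj X))]
    simp only [Functor.map_comp, Category.assoc]
    rw [← reassoc_of% (s.natX K ((G c₁).map ξ)), rightT_char]
    erw [(adjFG c₂).counit_naturality]
    rw [reassoc_of% (rightT_char adjFG s hiso K X),
      ← comp_whiskerRight]
    erw [(adjFG c₁).counit_naturality]
    rw [comp_whiskerRight]
  assoc {c₁ c₂ c₃} K L X := by
    haveI := hiso K ((G c₁).obj X)
    haveI := hiso L ((G c₁).obj X ≫ K)
    haveI : IsIso (s.t K ((G c₁).obj X) ▷ L) :=
      (Bicategory.whiskerRightIso (asIso (s.t K ((G c₁).obj X))) L).isIso_hom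
    apply adj_hom_ext adjFG
    rw [← cancel_epi (s.t L ((G c₁).obj X ≫ K)), ← cancel_epi (s.t K ((G c₁).obj X) ▷ L)]
    simp only [Functor.map_comp, Category.assoc]
    rw [← reassoc_of% (s.natX L (rightT adjFG s hiso K X)), rightT_char,
      ← comp_whiskerRight, ← comp_whiskerRight, rightT_char,
      reassoc_of% (s.assoc K L ((G c₁).obj X)),
      ← Functor.map_comp_assoc, Iso.inv_hom_id, CategoryTheory.Functor.map_id, Category.id_comp]
    erw [(adjFG c₃).counit_naturality]
    rw [reassoc_of% (rightT_char adjFG s hiso (K ≫ L) X),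
      ← associator_naturality_left_assoc, Iso.hom_inv_id, Category.comp_id]
  unital {c₁} X := by
    haveI := hiso (𝟙 c₁) ((G c₁).obj X)
    apply adj_hom_ext adjFG
    rw [← cancel_epi (s.t (𝟙 c₁) ((G c₁).obj X))]
    simp only [Functor.map_comp, Category.assoc]
    rw [rightT_char]
    erw [(adjFG c₁).counit_naturality]
    rw [s.unital,
      Category.assoc, ← Functor.map_comp_assoc, Iso.inv_hom_id, CategoryTheory.Functor.map_id,
      Category.id_comp, ← rightUnitor_naturality_assoc]
    simp

lemma t_mate {c₁ c₂ : B} (K : c₁ ⟶ c₂) (X : a ⟶ c₁) :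
    s.t K X ≫ mateMap adjFG (rightTrans adjFG s hiso) K X = 𝟙 _ := by
  rw [mateMap, Adjunction.homEquiv_counit]
  show s.t K X ≫ (F c₂).map (((adjFG c₁).unit.app X ▷ K) ≫ rightT adjFG s hiso K ((F c₁).obj X))
      ≫ (adjFG c₂).counit.app ((F c₁).obj X ≫ K) = 𝟙 _
  rw [Functor.map_comp, Category.assoc, ← reassoc_of% (s.natX K ((adjFG c₁).unit.app X)),
    rightT_char, ← comp_whiskerRight, Adjunction.left_triangle_components,
    id_whiskerRight]

lemma mate_t {c₁ c₂ : B} (K : c₁ ⟶ c₂) (X : a ⟶ c₁) :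
    mateMap adjFG (rightTrans adjFG s hiso) K X ≫ s.t K X = 𝟙 _ := by
  haveI := hiso K X
  rw [IsIso.eq_inv_of_hom_inv_id (t_mate adjFG s hiso K X), IsIso.inv_hom_id]

end Aux

theorem strong_iff_right_adjoint_transformation
    -- the closed structure on `𝔅`
    (rt : ∀ {x y : B} (M : x ⟶ y) (c : B), (x ⟶ c) ⥤ (y ⟶ c))
    (adj : ∀ {x y : B} (M : x ⟶ y) (c : B), precompF M c ⊣ rt M c)
    (lt : ∀ {x y : B} (M : x ⟶ y) (c : B), (c ⟶ y) ⥤ (c ⟶ x))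
    (adjL : ∀ {x y : B} (M : x ⟶ y) (c : B), postcompF M c ⊣ lt M c)
    (a b : B) (F : ∀ c : B, (a ⟶ c) ⥤ (b ⟶ c)) (s : TransData a b F) :
    (∀ {c₁ c₂ : B} (K : c₁ ⟶ c₂) (X : a ⟶ c₁), IsIso (s.t K X)) ↔
      (∃ (G : ∀ c : B, (b ⟶ c) ⥤ (a ⟶ c)) (adjFG : ∀ c : B, F c ⊣ G c)
        (s' : TransData b a G),
        ∀ {c₁ c₂ : B} (K : c₁ ⟶ c₂) (X : a ⟶ c₁),
          s.t K X ≫ mateMap adjFG s' K X = 𝟙 _ ∧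
          mateMap adjFG s' K X ≫ s.t K X = 𝟙 _) := by
  constructor
  · intro hiso
    have ι : ∀ c : B, precompF ((F a).obj (𝟙 a)) c ≅ F c := fun c =>
      NatIso.ofComponents
        (fun X => @asIso _ _ _ _ (s.t X (𝟙 a)) (hiso X (𝟙 a)) ≪≫ (F c).mapIso (λ_ X))
        (fun {X X'} θ => by
          dsimp
          erw [reassoc_of% (s.natK θ (𝟙 a)), ← CategoryTheory.Functor.map_comp,
            leftUnitor_naturality, CategoryTheory.Functor.map_comp, Category.assoc]
          rfl)
    refine ⟨fun c => rt ((F a).obj (𝟙 a)) c,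
      fun c => (adj ((F a).obj (𝟙 a)) c).ofNatIsoLeft (ι c),
      rightTrans (fun c => (adj ((F a).obj (𝟙 a)) c).ofNatIsoLeft (ι c)) s hiso, fun K X =>
      ⟨t_mate _ s hiso K X, mate_t _ s hiso K X⟩⟩
  · rintro ⟨G, adjFG, s', h⟩ c₁ c₂ K X
    exact ⟨mateMap adjFG s' K X, (h K X).1, (h K X).2⟩
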